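/- Let σ : [0,1] → (0,∞) be a left-continuous step function and let J(s) = ∫₀ˢ σ²(r) dr. Then there exists a unique non-increasing left-continuous step function s ↦ σ̄(s) such that the concave hull Ĵ of J satisfies Ĵ(s) = ∫₀ˢ σ̄²(r) dr for all s ∈ (0,1]. -/

import Mathlib

open MeasureTheory intervalIntegral

lemma st7_constIoc_int {f : ℝ → ℝ} {a b c : ℝ} (hab : a ≤ b)
    (h : ∀ r ∈ Set.Ioc a b, f r = c) :
    IntervalIntegrable f volume a b ∧ ∫ r in a..b, f r = c * (b - a) := by
  have hae : f =ᵐ[volume.restrict (Set.Ioc a b)] fun _ => c := by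
    filter_upwards [ae_restrict_mem measurableSet_Ioc] with r hr
    exact h r hr
  have hii : IntervalIntegrable f volume a b := by
    rw [intervalIntegrable_iff_integrableOn_Ioc_of_le hab]
    exact (integrableOn_const measure_Ioc_lt_top.ne).congr hae.symm
  refine ⟨hii, ?_⟩
  rw [intervalIntegral.integral_of_le hab, integral_congr_ae hae, setIntegral_const,
    measureReal_def, Real.volume_Ioc, smul_eq_mul, ENNReal.toReal_ofReal (by linarith), mul_comm]

lemma st7_muMono {m : ℕ} {mu : ℕ → ℝ} (hmono : ∀ j < m, mu j < mu (j+1)) :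
    ∀ i j, i < j → j ≤ m → mu i < mu j := by
  intro i j hij hjm
  induction j with
  | zero => omega
  | succ n ih =>
    rcases Nat.lt_or_ge i n with h | h
    · exact (ih h (by omega)).trans (hmono n (by omega))
    · have : i = n := by omega
      subst this; exact hmono i (by omega)

lemma st7_muMono' {m : ℕ} {mu : ℕ → ℝ} (hmono : ∀ j < m, mu j < mu (j+1)) :
    ∀ i j, i ≤ j → j ≤ m → mu i ≤ mu j := by
  intro i j hij hjm
  rcases eq_or_lt_of_le hij with rfl | h
  · exact le_rfl
  · exact (st7_muMono hmono i j h hjm).le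

lemma st7_locate {m : ℕ} {mu : ℕ → ℝ} (h0 : mu 0 = 0)
    (hmono : ∀ j < m, mu j < mu (j+1)) {s : ℝ} (hs0 : 0 < s) (hs1 : s ≤ mu m) :
    ∃ j, 1 ≤ j ∧ j ≤ m ∧ mu (j-1) < s ∧ s ≤ mu j := by
  have hex : ∃ j, s ≤ mu j := ⟨m, hs1⟩
  classical
  refine ⟨Nat.find hex, ?_, ?_, ?_, Nat.find_spec hex⟩
  · rcases Nat.eq_zero_or_pos (Nat.find hex) with h | h
    · exfalso; have := Nat.find_spec hex; rw [h, h0] at this; linarith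
    · omega
  · by_contra hc
    push_neg at hc
    have := Nat.find_min hex (m := m) hc
    exact this hs1
  · have h1 : 1 ≤ Nat.find hex := by
      rcases Nat.eq_zero_or_pos (Nat.find hex) with h | h
      · exfalso; have := Nat.find_spec hex; rw [h, h0] at this; linarith
      · omega
    have := Nat.find_min hex (m := Nat.find hex - 1) (by omega)
    linarith [lt_of_not_ge this]

lemma st7_stepII {m : ℕ} {mu : ℕ → ℝ} {f : ℝ → ℝ} {c : ℕ → ℝ} (h0 : mu 0 = 0)
    (hmono : ∀ j < m, mu j < mu (j+1))
    (hstep : ∀ j, 1 ≤ j → j ≤ m → ∀ s ∈ Set.Ioc (mu (j-1)) (mu j), f s = c j) :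
    ∀ l, l ≤ m → ∀ t, 0 ≤ t → t ≤ mu l →
      IntervalIntegrable (fun r => f r ^ 2) volume 0 t := by
  intro l
  induction l with
  | zero =>
    intro _ t ht0 ht1
    have : t = 0 := le_antisymm (by rwa [h0] at ht1) ht0
    subst this
    exact IntervalIntegrable.refl
  | succ n ih =>
    intro hnm t ht0 ht1
    rcases le_or_gt t (mu n) with h | h
    · exact ih (by omega) t ht0 h
    · have hII1 : IntervalIntegrable (fun r => f r ^ 2) volume 0 (mu n) := by
        refine ih (by omega) (mu n) ?_ le_rfl
        rw [← h0]; exact st7_muMono' hmono 0 n (by omega) (by omega)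
      have hII2 : IntervalIntegrable (fun r => f r ^ 2) volume (mu n) t := by
        refine (st7_constIoc_int (c := c (n+1) ^ 2) h.le ?_).1
        intro r hr
        have : f r = c (n+1) := by
          refine hstep (n+1) (by omega) hnm r ?_
          simp only [Nat.add_sub_cancel]
          exact ⟨hr.1, hr.2.trans ht1⟩
        rw [this]
      exact hII1.trans hII2

lemma st7_stepDiff {m : ℕ} {mu : ℕ → ℝ} {f : ℝ → ℝ} {c : ℕ → ℝ} (h0 : mu 0 = 0)
    (hmono : ∀ j < m, mu j < mu (j+1))
    (hstep : ∀ j, 1 ≤ j → j ≤ m → ∀ s ∈ Set.Ioc (mu (j-1)) (mu j), f s = c j)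
    {j : ℕ} (hj1 : 1 ≤ j) (hjm : j ≤ m) {t s : ℝ}
    (ht : mu (j-1) ≤ t) (hts : t ≤ s) (hs : s ≤ mu j) :
    (∫ r in (0:ℝ)..s, f r ^ 2) - (∫ r in (0:ℝ)..t, f r ^ 2) = c j ^ 2 * (s - t) := by
  have ht0 : 0 ≤ t := by
    have h2 : mu 0 ≤ mu (j-1) := st7_muMono' hmono 0 (j-1) (by omega) (by omega)
    rw [h0] at h2; linarith
  have hII1 : IntervalIntegrable (fun r => f r ^ 2) volume 0 t :=
    st7_stepII h0 hmono hstep j hjm t ht0 (hts.trans hs)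
  have hconst : ∀ r ∈ Set.Ioc t s, f r ^ 2 = c j ^ 2 := by
    intro r hr
    rw [hstep j hj1 hjm r ⟨lt_of_le_of_lt ht hr.1, hr.2.trans hs⟩]
  obtain ⟨hII2, hval⟩ := st7_constIoc_int (c := c j ^ 2) hts hconst
  have hadd := intervalIntegral.integral_add_adjacent_intervals hII1 hII2
  rw [← hadd, hval]; ring

lemma st7_exists_max_last (i M : ℕ) (h : i < M) (g : ℕ → ℝ) :
    ∃ n, i < n ∧ n ≤ M ∧ (∀ j, i < j → j ≤ M → g j ≤ g n) ∧
      (∀ j, n < j → j ≤ M → g j < g n) := by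
  classical
  set S := Finset.Ioc i M with hS
  have hne : S.Nonempty := ⟨M, by simp [hS]; omega⟩
  set b := S.sup' hne g with hb
  obtain ⟨n0, hn0S, hn0⟩ := Finset.exists_mem_eq_sup' hne g
  set A := S.filter (fun j => g j = b) with hA
  have hAne : A.Nonempty := ⟨n0, by simp [hA, hn0S, hn0.symm, hb]⟩
  set n := A.max' hAne with hn
  have hnA : n ∈ A := A.max'_mem hAne
  have hnS : n ∈ S := (Finset.mem_filter.1 hnA).1
  have hgn : g n = b := (Finset.mem_filter.1 hnA).2
  have hmemS : ∀ j, i < j → j ≤ M → j ∈ S := by intro j h1 h2; simp [hS]; omega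
  refine ⟨n, (Finset.mem_Ioc.1 hnS).1, (Finset.mem_Ioc.1 hnS).2, ?_, ?_⟩
  · intro j h1 h2
    rw [hgn]; exact Finset.le_sup' g (hmemS j h1 h2)
  · intro j h1 h2
    have hjS : j ∈ S := hmemS j (lt_trans (Finset.mem_Ioc.1 hnS).1 h1) h2
    have hle : g j ≤ b := Finset.le_sup' g hjS
    rcases lt_or_eq_of_le hle with hlt | heq
    · rwa [hgn]
    · exfalso
      have h3 : j ∈ A := Finset.mem_filter.2 ⟨hjS, heq⟩
      have := A.le_max' j h3
      omega

lemma st7_hull_exists (M : ℕ) (hM : 1 ≤ M) (x y : ℕ → ℝ) (hx : ∀ i < M, x i < x (i+1)) :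
    ∃ k : ℕ, ∃ idx : ℕ → ℕ, 1 ≤ k ∧ idx 0 = 0 ∧ idx k = M ∧
      (∀ j < k, idx j < idx (j+1)) ∧ (∀ j, j ≤ k → idx j ≤ M) ∧
      (∀ j, 1 ≤ j → j < k →
        (y (idx (j+1)) - y (idx j)) / (x (idx (j+1)) - x (idx j)) <
          (y (idx j) - y (idx (j-1))) / (x (idx j) - x (idx (j-1)))) ∧
      (∀ j, 1 ≤ j → j ≤ k → ∀ i, idx (j-1) ≤ i → i ≤ idx j →
        y i ≤ y (idx (j-1)) +
          (y (idx j) - y (idx (j-1))) / (x (idx j) - x (idx (j-1))) * (x i - x (idx (j-1)))) := by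
  classical
  have hxm := st7_muMono (m := M) (mu := x) hx
  have hnxt : ∀ i, ∃ n, (i < M → (i < n ∧ n ≤ M ∧
      (∀ j, i < j → j ≤ M → (y j - y i)/(x j - x i) ≤ (y n - y i)/(x n - x i)) ∧
      (∀ j, n < j → j ≤ M → (y j - y i)/(x j - x i) < (y n - y i)/(x n - x i)))) ∧
      (¬ i < M → n = M) := by
    intro i
    by_cases h : i < M
    · obtain ⟨n, h1, h2, h3, h4⟩ := st7_exists_max_last i M h (fun j => (y j - y i)/(x j - x i))
      exact ⟨n, fun _ => ⟨h1, h2, h3, h4⟩, fun hc => absurd h hc⟩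
    · exact ⟨M, fun hc => absurd hc h, fun _ => rfl⟩
  choose nxt hnxt using hnxt
  set idx : ℕ → ℕ := fun j => Nat.rec 0 (fun _ p => nxt p) j with hidx
  have hidx0 : idx 0 = 0 := rfl
  have hidxS : ∀ j, idx (j+1) = nxt (idx j) := fun j => rfl
  have hidxM : ∀ j, idx j ≤ M := by
    intro j
    induction j with
    | zero => simp [hidx0]
    | succ n ih =>
      rw [hidxS]
      by_cases h : idx n < M
      · exact ((hnxt (idx n)).1 h).2.1
      · rw [(hnxt (idx n)).2 h]
  have hlt : ∀ j, idx j < M → idx j < idx (j+1) := by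
    intro j h
    rw [hidxS]; exact ((hnxt (idx j)).1 h).1
  have hreach : ∃ j, idx j = M := by
    by_contra hc
    push_neg at hc
    have hgrow : ∀ j, j ≤ idx j := by
      intro j
      induction j with
      | zero => omega
      | succ n ih =>
        have h1 : idx n < M := lt_of_le_of_ne (hidxM n) (hc n)
        have := hlt n h1
        omega
    exact hc M (le_antisymm (hidxM M) (hgrow M))
  set k := Nat.find hreach with hk
  have hkM : idx k = M := Nat.find_spec hreach
  have hk1 : 1 ≤ k := by
    rcases Nat.eq_zero_or_pos k with h | h
    · exfalso; rw [h] at hkM; rw [hidx0] at hkM; omega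
    · omega
  have hltk : ∀ j, j < k → idx j < M := by
    intro j hj
    exact lt_of_le_of_ne (hidxM j) (Nat.find_min hreach hj)
  have hmono2 : ∀ j < k, idx j < idx (j+1) := fun j hj => hlt j (hltk j hj)
  refine ⟨k, idx, hk1, hidx0, hkM, hmono2, fun j _ => hidxM j, ?_, ?_⟩
  · intro j hj1 hjk
    set a := idx (j-1) with ha
    set b := idx j with hb
    set c := idx (j+1) with hc
    have hab : a < b := by
      have h2 := hmono2 (j-1) (by omega)
      rwa [show j-1+1 = j by omega] at h2
    have haM : a < M := hltk (j-1) (by omega)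
    have hbM : b < M := hltk j hjk
    have hbc : b < c := hmono2 j hjk
    have hcM : c ≤ M := hidxM (j+1)
    have hbn : b = nxt a := by rw [hb, ha, ← hidxS, show j-1+1 = j by omega]
    have hxab : x a < x b := hxm a b hab (by omega)
    have hxbc : x b < x c := hxm b c hbc hcM
    have hstrict : (y c - y a)/(x c - x a) < (y b - y a)/(x b - x a) := by
      have h2 := ((hnxt a).1 haM).2.2.2 c (by rw [hbn] at hbc; exact hbc) hcM
      rwa [← hbn] at h2
    have h1 : y c - y a < (y b - y a)/(x b - x a) * (x c - x a) :=
      (div_lt_iff₀ (by linarith)).1 hstrict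
    have h2 : (y b - y a)/(x b - x a) * (x b - x a) = y b - y a :=
      div_mul_cancel₀ _ (by linarith : x b - x a ≠ 0)
    rw [div_lt_div_iff₀ (by linarith) (by linarith)]
    nlinarith [h1, h2]
  · intro j hj1 hjk i hi1 hi2
    set a := idx (j-1) with ha
    set b := idx j with hb
    have hab : a < b := by
      have h2 := hmono2 (j-1) (by omega)
      rwa [show j-1+1 = j by omega] at h2
    have haM : a < M := by
      have h2 : b ≤ M := hidxM j
      omega
    have hbn : b = nxt a := by rw [hb, ha, ← hidxS, show j-1+1 = j by omega]
    rcases eq_or_lt_of_le hi1 with rfl | hia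
    · simp
    · have hbM : b ≤ M := hidxM j
      have hiM : i ≤ M := le_trans hi2 hbM
      have hle : (y i - y a)/(x i - x a) ≤ (y b - y a)/(x b - x a) := by
        have h2 := ((hnxt a).1 haM).2.2.1 i hia hiM
        rwa [← hbn] at h2
      have hxai : x a < x i := hxm a i hia hiM
      have h3 := (div_le_iff₀ (by linarith)).1 hle
      linarith

lemma st7_lin_le (b d u v t p q : ℝ) (h1 : u ≤ t) (h2 : t ≤ v)
    (hu : p ≤ q) (hv : p + b*(v-u) ≤ q + d*(v-u)) :
    p + b*(t-u) ≤ q + d*(t-u) := by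
  rcases le_total b d with h | h
  · nlinarith [mul_nonneg (sub_nonneg.2 h1) (sub_nonneg.2 h)]
  · nlinarith [mul_nonneg (sub_nonneg.2 h2) (sub_nonneg.2 h)]

set_option maxHeartbeats 1000000 in
/-- A non-increasing left-continuous step function `σ̄ : [0,1] → (0,∞)`, unique on `(0,1]`,
whose squared integral realizes the concave hull `Ĵ` of `J(s) = ∫₀ˢ σ²(r) dr`, where `σ` is a
positive left-continuous step function. -/
theorem stmt7 (M : ℕ) (hM : 1 ≤ M) (lam : ℕ → ℝ) (sig : ℕ → ℝ)
    (hlam0 : lam 0 = 0) (hlamM : lam M = 1)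
    (hmono : ∀ i < M, lam i < lam (i + 1))
    (hsigpos : ∀ i, 1 ≤ i → i ≤ M → 0 < sig i)
    (σf : ℝ → ℝ)
    (hσf : ∀ i, 1 ≤ i → i ≤ M → ∀ s ∈ Set.Ioc (lam (i - 1)) (lam i), σf s = sig i)
    (J : ℝ → ℝ) (hJ : ∀ s, J s = ∫ r in (0 : ℝ)..s, (σf r) ^ 2)
    (Jhat : ℝ → ℝ)
    -- `Jhat` is the concave hull of `J` on `[0,1]` (pointwise infimum of concave majorants)
    (hJhat : ∀ s ∈ Set.Icc (0 : ℝ) 1,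
      Jhat s = sInf {y : ℝ | ∃ g : ℝ → ℝ, ConcaveOn ℝ (Set.Icc (0 : ℝ) 1) g ∧
        (∀ x ∈ Set.Icc (0 : ℝ) 1, J x ≤ g x) ∧ y = g s}) :
    ∃ σbar : ℝ → ℝ,
      ((∃ m : ℕ, 1 ≤ m ∧ ∃ mu : ℕ → ℝ, mu 0 = 0 ∧ mu m = 1 ∧
          (∀ j < m, mu j < mu (j + 1)) ∧
          ∀ j, 1 ≤ j → j ≤ m → ∀ s ∈ Set.Ioc (mu (j - 1)) (mu j), σbar s = σbar (mu j)) ∧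
        AntitoneOn σbar (Set.Ioc (0 : ℝ) 1) ∧
        (∀ s ∈ Set.Ioc (0 : ℝ) 1, 0 < σbar s) ∧
        (∀ s ∈ Set.Ioc (0 : ℝ) 1, Jhat s = ∫ r in (0 : ℝ)..s, (σbar r) ^ 2)) ∧
      ∀ σbar' : ℝ → ℝ,
        ((∃ m : ℕ, 1 ≤ m ∧ ∃ mu : ℕ → ℝ, mu 0 = 0 ∧ mu m = 1 ∧
            (∀ j < m, mu j < mu (j + 1)) ∧
            ∀ j, 1 ≤ j → j ≤ m → ∀ s ∈ Set.Ioc (mu (j - 1)) (mu j), σbar' s = σbar' (mu j)) ∧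
          AntitoneOn σbar' (Set.Ioc (0 : ℝ) 1) ∧
          (∀ s ∈ Set.Ioc (0 : ℝ) 1, 0 < σbar' s) ∧
          (∀ s ∈ Set.Ioc (0 : ℝ) 1, Jhat s = ∫ r in (0 : ℝ)..s, (σbar' r) ^ 2)) →
        ∀ s ∈ Set.Ioc (0 : ℝ) 1, σbar' s = σbar s := by
  classical
  have hlmono := st7_muMono (m := M) (mu := lam) hmono
  have hlmono' := st7_muMono' (m := M) (mu := lam) hmono
  -- values of J
  have hJdiff : ∀ i, 1 ≤ i → i ≤ M → ∀ t s : ℝ, lam (i-1) ≤ t → t ≤ s → s ≤ lam i →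
      J s - J t = sig i ^ 2 * (s - t) := by
    intro i h1 h2 t s ht hts hs
    rw [hJ s, hJ t]
    exact st7_stepDiff (mu := lam) (c := sig) hlam0 hmono hσf h1 h2 ht hts hs
  have hJ0 : J 0 = 0 := by rw [hJ]; exact intervalIntegral.integral_same
  have hJpiece : ∀ i, 1 ≤ i → i ≤ M → ∀ s, lam (i-1) ≤ s → s ≤ lam i →
      J s = J (lam (i-1)) + sig i ^ 2 * (s - lam (i-1)) := by
    intro i h1 h2 s hs1 hs2
    have := hJdiff i h1 h2 (lam (i-1)) s le_rfl hs1 hs2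
    linarith
  have hYsucc : ∀ n, n < M → J (lam n) < J (lam (n+1)) := by
    intro n hn
    have h1 := hJpiece (n+1) (by omega) (by omega) (lam (n+1))
      (by rw [Nat.add_sub_cancel]; exact (hmono n hn).le) le_rfl
    rw [Nat.add_sub_cancel] at h1
    nlinarith [pow_pos (hsigpos (n+1) (by omega) (by omega)) 2, hmono n hn]
  have hYmono : ∀ i j, i < j → j ≤ M → J (lam i) < J (lam j) :=
    st7_muMono (m := M) (mu := fun i => J (lam i)) hYsucc
  -- hull
  obtain ⟨k, idx, hk1, hidx0, hidxk, hidxmono, hidxle, hslopes, hmaj⟩ :=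
    st7_hull_exists M hM lam (fun i => J (lam i)) hmono
  set mu : ℕ → ℝ := fun j => lam (idx j) with hmu
  have hmu_def : ∀ j, mu j = lam (idx j) := fun j => rfl
  have hmu0 : mu 0 = 0 := by rw [hmu_def, hidx0, hlam0]
  have hmuk : mu k = 1 := by rw [hmu_def, hidxk, hlamM]
  have hmumono : ∀ j < k, mu j < mu (j+1) := by
    intro j hj
    rw [hmu_def, hmu_def]
    exact hlmono (idx j) (idx (j+1)) (hidxmono j hj) (hidxle (j+1) hj)
  have hmumono' := st7_muMono' (m := k) (mu := mu) hmumono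
  have hmupos : ∀ j, j ≤ k → 0 ≤ mu j := by
    intro j hj
    rw [← hmu0]; exact hmumono' 0 j (by omega) hj
  have hmule1 : ∀ j, j ≤ k → mu j ≤ 1 := by
    intro j hj
    rw [← hmuk]; exact hmumono' j k hj le_rfl
  set slp : ℕ → ℝ := fun j => (J (mu j) - J (mu (j-1))) / (mu j - mu (j-1)) with hslp
  have hslp_def : ∀ j, slp j = (J (mu j) - J (mu (j-1))) / (mu j - mu (j-1)) := fun j => rfl
  have hslp_pos : ∀ j, 1 ≤ j → j ≤ k → 0 < slp j := by
    intro j h1 h2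
    rw [hslp_def]
    apply div_pos
    · have := hYmono (idx (j-1)) (idx j)
        (by have := hidxmono (j-1) (by omega); rwa [show j-1+1 = j by omega] at this)
        (hidxle j h2)
      rw [hmu_def, hmu_def]; linarith
    · have := st7_muMono hmumono (j-1) j (by omega) h2
      linarith
  have hslp_dec : ∀ j, 1 ≤ j → j < k → slp (j+1) < slp j := by
    intro j h1 h2
    have h3 := hslopes j h1 h2
    simp only [hslp_def, hmu_def, Nat.add_sub_cancel]
    exact h3
  have hslp_anti : ∀ p, 1 ≤ p → ∀ q, p ≤ q → q ≤ k → slp q ≤ slp p := by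
    intro p hp q hpq
    induction q, hpq using Nat.le_induction with
    | base => intro _; exact le_rfl
    | succ n hn ih =>
      intro h
      have h4 := hslp_dec n (le_trans hp hn) (by omega)
      exact le_trans h4.le (ih (by omega))
  -- jof
  have hjex : ∀ s : ℝ, ∃ j, s ≤ mu j ∨ k ≤ j := fun s => ⟨k, Or.inr le_rfl⟩
  set jof : ℝ → ℕ := fun s => Nat.find (hjex s) with hjof
  have hjof_eq : ∀ l, 1 ≤ l → l ≤ k → ∀ s ∈ Set.Ioc (mu (l-1)) (mu l), jof s = l := by
    intro l h1 h2 s hs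
    rw [hjof]
    rw [Nat.find_eq_iff]
    refine ⟨Or.inl hs.2, ?_⟩
    rintro n hn (h3 | h3)
    · have h4 : mu n ≤ mu (l-1) := hmumono' n (l-1) (by omega) (by omega)
      have := hs.1
      linarith
    · omega
  set σbar : ℝ → ℝ := fun s => Real.sqrt (slp (jof s)) with hσbar
  have hstep_c : ∀ j, 1 ≤ j → j ≤ k → ∀ s ∈ Set.Ioc (mu (j-1)) (mu j),
      σbar s = Real.sqrt (slp j) := by
    intro j h1 h2 s hs
    rw [hσbar]
    simp only
    rw [hjof_eq j h1 h2 s hs]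
  have hmuSelf : ∀ l, 1 ≤ l → l ≤ k → mu l ∈ Set.Ioc (mu (l-1)) (mu l) :=
    fun l h1 h2 => ⟨st7_muMono hmumono (l-1) l (by omega) h2, le_rfl⟩
  have hstepbar : ∀ j, 1 ≤ j → j ≤ k → ∀ s ∈ Set.Ioc (mu (j-1)) (mu j), σbar s = σbar (mu j) := by
    intro j h1 h2 s hs
    rw [hstep_c j h1 h2 s hs, hstep_c j h1 h2 (mu j) (hmuSelf j h1 h2)]
  -- antitone, positivity
  have hjof_bounds : ∀ s ∈ Set.Ioc (0:ℝ) 1, 1 ≤ jof s ∧ jof s ≤ k := by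
    intro s hs
    obtain ⟨l, h1, h2, h3, h4⟩ := st7_locate hmu0 hmumono hs.1 (by rw [hmuk]; exact hs.2)
    rw [hjof_eq l h1 h2 s ⟨h3, h4⟩]
    exact ⟨h1, h2⟩
  have hanti : AntitoneOn σbar (Set.Ioc (0:ℝ) 1) := by
    intro p hp q hq hpq
    rw [hσbar]
    simp only
    apply Real.sqrt_le_sqrt
    refine hslp_anti (jof p) (hjof_bounds p hp).1 (jof q) ?_ (hjof_bounds q hq).2
    rw [hjof]
    refine Nat.find_min' (hjex p) ?_
    rcases Nat.find_spec (hjex q) with h | h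
    · exact Or.inl (hpq.trans h)
    · exact Or.inr h
  have hpos : ∀ s ∈ Set.Ioc (0:ℝ) 1, 0 < σbar s := by
    intro s hs
    rw [hσbar]
    exact Real.sqrt_pos.2 (hslp_pos (jof s) (hjof_bounds s hs).1 (hjof_bounds s hs).2)
  -- hull lines
  set A : ℕ → ℝ → ℝ := fun j s => J (mu (j-1)) + slp j * (s - mu (j-1)) with hA
  have hA_def : ∀ j s, A j s = J (mu (j-1)) + slp j * (s - mu (j-1)) := fun j s => rfl
  have hApt : ∀ j, 1 ≤ j → j ≤ k → J (mu j) = J (mu (j-1)) + slp j * (mu j - mu (j-1)) := by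
    intro j h1 h2
    have hΔ : mu j - mu (j-1) ≠ 0 :=
      sub_ne_zero.mpr (ne_of_gt (st7_muMono hmumono (j-1) j (by omega) h2))
    rw [hslp_def, div_mul_cancel₀ _ hΔ]
    ring
  have hkey : ∀ j s, 1 ≤ j → j < k → A j s - A (j+1) s = (slp j - slp (j+1)) * (s - mu j) := by
    intro j s h1 h2
    have h3 := hApt j h1 h2.le
    simp only [hA_def, Nat.add_sub_cancel]
    rw [h3]; ring
  have hD1 : ∀ j, 1 ≤ j → j < k → ∀ s, mu j ≤ s → A (j+1) s ≤ A j s := by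
    intro j h1 h2 s hs
    have h3 := hkey j s h1 h2
    nlinarith [hslp_dec j h1 h2]
  have hD2 : ∀ j, 1 ≤ j → j < k → ∀ s, s ≤ mu j → A j s ≤ A (j+1) s := by
    intro j h1 h2 s hs
    have h3 := hkey j s h1 h2
    nlinarith [hslp_dec j h1 h2]
  have hCdown : ∀ j, 1 ≤ j → ∀ l, j ≤ l → l ≤ k → ∀ s, mu (l-1) ≤ s → A l s ≤ A j s := by
    intro j hj l hjl
    induction l, hjl using Nat.le_induction with
    | base => intro _ s _; exact le_rfl
    | succ n hn ih =>
      intro hk2 s hms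
      rw [Nat.add_sub_cancel] at hms
      have t1 : A (n+1) s ≤ A n s := hD1 n (le_trans hj hn) (by omega) s hms
      have t2 : A n s ≤ A j s := by
        refine ih (by omega) s (le_trans ?_ hms)
        exact hmumono' (n-1) n (by omega) (by omega)
      linarith
  have hCup : ∀ l, 1 ≤ l → ∀ j, l ≤ j → j ≤ k → ∀ s, s ≤ mu l → A l s ≤ A j s := by
    intro l hl j hlj
    induction j, hlj using Nat.le_induction with
    | base => intro _ s _; exact le_rfl
    | succ n hn ih =>
      intro hk2 s hsl
      have t2 : A l s ≤ A n s := ih (by omega) s hsl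
      have t1 : A n s ≤ A (n+1) s :=
        hD2 n (le_trans hl hn) (by omega) s (le_trans hsl (hmumono' l n hn (by omega)))
      linarith
  have hcross : ∀ l, 1 ≤ l → l ≤ k → ∀ j, 1 ≤ j → j ≤ k → ∀ s,
      mu (l-1) ≤ s → s ≤ mu l → A l s ≤ A j s := by
    intro l h1 h2 j h3 h4 s h5 h6
    rcases le_total j l with h | h
    · exact hCdown j h3 l h h2 s h5
    · exact hCup l h1 j h h4 s h6
  -- G, the concave envelope
  have hne : (Finset.Icc 1 k).Nonempty := ⟨1, Finset.mem_Icc.2 ⟨le_rfl, hk1⟩⟩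
  set G : ℝ → ℝ := fun s => (Finset.Icc 1 k).inf' hne (fun j => A j s) with hG
  have hGdef : ∀ s, G s = (Finset.Icc 1 k).inf' hne (fun j => A j s) := fun s => rfl
  have hGle : ∀ s, ∀ j, 1 ≤ j → j ≤ k → G s ≤ A j s := by
    intro s j h1 h2
    rw [hGdef]
    exact Finset.inf'_le _ (Finset.mem_Icc.2 ⟨h1, h2⟩)
  have hGeq : ∀ l, 1 ≤ l → l ≤ k → ∀ s, mu (l-1) ≤ s → s ≤ mu l → G s = A l s := by
    intro l h1 h2 s h3 h4
    refine le_antisymm (hGle s l h1 h2) ?_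
    rw [hGdef]
    refine Finset.le_inf' hne _ (fun j hj => ?_)
    obtain ⟨hj1, hj2⟩ := Finset.mem_Icc.1 hj
    exact hcross l h1 h2 j hj1 hj2 s h3 h4
  have hmA : ∀ l, 1 ≤ l → l ≤ k → ∀ i, idx (l-1) ≤ i → i ≤ idx l →
      J (lam i) ≤ A l (lam i) := by
    intro l h1 h2 i hi1 hi2
    have h3 := hmaj l h1 h2 i hi1 hi2
    simp only [hA_def, hslp_def, hmu_def]
    exact h3
  -- G is concave
  have hGconc : ConcaveOn ℝ (Set.Icc (0:ℝ) 1) G := by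
    refine ⟨convex_Icc 0 1, ?_⟩
    intro p hp q hq a b ha hb hab
    simp only [smul_eq_mul]
    rw [hGdef (a * p + b * q)]
    refine Finset.le_inf' hne _ (fun j hj => ?_)
    obtain ⟨hj1, hj2⟩ := Finset.mem_Icc.1 hj
    have e : A j (a*p + b*q) = a * A j p + b * A j q := by
      simp only [hA_def]
      linear_combination (slp j * mu (j-1) - J (mu (j-1))) * hab
    rw [e]
    exact add_le_add (mul_le_mul_of_nonneg_left (hGle p j hj1 hj2) ha)
      (mul_le_mul_of_nonneg_left (hGle q j hj1 hj2) hb)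
  -- G majorizes J on [0,1]
  have hGmaj : ∀ t ∈ Set.Icc (0:ℝ) 1, J t ≤ G t := by
    intro t ht
    rw [hGdef]
    refine Finset.le_inf' hne _ (fun j hj => ?_)
    obtain ⟨hj1, hjk⟩ := Finset.mem_Icc.1 hj
    rcases eq_or_lt_of_le ht.1 with h0 | h0
    · rw [← h0, hJ0]
      have h1 : A 1 0 ≤ A j 0 := by
        refine hCup 1 le_rfl j hj1 hjk 0 (hmupos 1 hk1)
      have h2 : A 1 0 = 0 := by
        rw [hA_def]
        norm_num [hmu0, hJ0]
      linarith
    · obtain ⟨i, hi1, hiM, hti1, hti2⟩ := st7_locate hlam0 hmono h0 (by rw [hlamM]; exact ht.2)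
      have hlex : ∃ l, i ≤ idx l := ⟨k, by rw [hidxk]; exact hiM⟩
      set l := Nat.find hlex with hl
      have hl2 : i ≤ idx l := Nat.find_spec hlex
      have hlk : l ≤ k := Nat.find_min' hlex (by rw [hidxk]; exact hiM)
      have hl1 : 1 ≤ l := by
        rcases Nat.eq_zero_or_pos l with h | h
        · exfalso; rw [h, hidx0] at hl2; omega
        · omega
      have hl3 : idx (l-1) < i := by
        have := Nat.find_min hlex (m := l - 1) (by omega)
        omega
      have hu' : J (lam (i-1)) ≤ A l (lam (i-1)) := hmA l hl1 hlk (i-1) (by omega) (by omega)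
      have hv' : J (lam i) ≤ A l (lam i) := hmA l hl1 hlk i (by omega) hl2
      have hJv := hJpiece i hi1 hiM (lam i) (hlmono (i-1) i (by omega) hiM).le le_rfl
      have hJt := hJpiece i hi1 hiM t hti1.le hti2
      have hv2 : J (lam (i-1)) + sig i ^ 2 * (lam i - lam (i-1)) ≤
          A l (lam (i-1)) + slp l * (lam i - lam (i-1)) := by
        have h5 : A l (lam i) = A l (lam (i-1)) + slp l * (lam i - lam (i-1)) := by
          simp only [hA_def]; ring
        rw [← h5, ← hJv]; exact hv'
      have key := st7_lin_le (sig i ^ 2) (slp l) (lam (i-1)) (lam i) t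
        (J (lam (i-1))) (A l (lam (i-1))) hti1.le hti2 hu' hv2
      have h6 : A l t = A l (lam (i-1)) + slp l * (t - lam (i-1)) := by
        simp only [hA_def]; ring
      have h7 : J t ≤ A l t := by rw [hJt, h6]; exact key
      have hmt1 : mu (l-1) ≤ t := by
        have h8 : lam (idx (l-1)) ≤ lam (i-1) := hlmono' (idx (l-1)) (i-1) (by omega) (by omega)
        rw [hmu_def]
        linarith
      have hmt2 : t ≤ mu l := by
        have h8 : lam i ≤ lam (idx l) := hlmono' i (idx l) hl2 (hidxle l hlk)
        rw [hmu_def]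
        linarith
      exact h7.trans (hcross l hl1 hlk j hj1 hjk t hmt1 hmt2)
  -- integral of σbar² up to mu points
  have hIntVal : ∀ l, l ≤ k → (∫ r in (0:ℝ)..(mu l), σbar r ^ 2) = J (mu l) := by
    intro l
    induction l with
    | zero =>
      intro _
      rw [hmu0, hJ0, intervalIntegral.integral_same]
    | succ n ih =>
      intro hl
      have ht : mu (n+1-1) ≤ mu n := by rw [Nat.add_sub_cancel]
      have hd := st7_stepDiff (c := fun j => Real.sqrt (slp j)) hmu0 hmumono hstep_c
        (j := n+1) (by omega) hl ht (hmumono n (by omega)).le le_rfl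
      rw [Real.sq_sqrt (hslp_pos (n+1) (by omega) hl).le] at hd
      have h3 := hApt (n+1) (by omega) hl
      rw [Nat.add_sub_cancel] at h3
      rw [ih (by omega)] at hd
      linarith
  have hIntPiece : ∀ s ∈ Set.Ioc (0:ℝ) 1, (∫ r in (0:ℝ)..s, σbar r ^ 2) = G s := by
    intro s hs
    obtain ⟨l, hl1, hlk, h1, h2⟩ := st7_locate hmu0 hmumono hs.1 (by rw [hmuk]; exact hs.2)
    have hd := st7_stepDiff (c := fun j => Real.sqrt (slp j)) hmu0 hmumono hstep_c
      hl1 hlk le_rfl h1.le h2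
    rw [hIntVal (l-1) (by omega), Real.sq_sqrt (hslp_pos l hl1 hlk).le] at hd
    rw [hGeq l hl1 hlk s h1.le h2, hA_def]
    linarith
  -- Jhat = G on (0,1]
  have hJhatG : ∀ s ∈ Set.Ioc (0:ℝ) 1, Jhat s = G s := by
    intro s hs
    have hsIcc : s ∈ Set.Icc (0:ℝ) 1 := ⟨hs.1.le, hs.2⟩
    rw [hJhat s hsIcc]
    have hmem : G s ∈ {y : ℝ | ∃ g : ℝ → ℝ, ConcaveOn ℝ (Set.Icc (0:ℝ) 1) g ∧
        (∀ x ∈ Set.Icc (0:ℝ) 1, J x ≤ g x) ∧ y = g s} := ⟨G, hGconc, hGmaj, rfl⟩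
    have hlb : ∀ y ∈ {y : ℝ | ∃ g : ℝ → ℝ, ConcaveOn ℝ (Set.Icc (0:ℝ) 1) g ∧
        (∀ x ∈ Set.Icc (0:ℝ) 1, J x ≤ g x) ∧ y = g s}, G s ≤ y := by
      rintro y ⟨g, hgc, hgm, rfl⟩
      obtain ⟨l, hl1, hlk, h1, h2⟩ := st7_locate hmu0 hmumono hs.1 (by rw [hmuk]; exact hs.2)
      rw [hGeq l hl1 hlk s h1.le h2]
      have huv : mu (l-1) < mu l := st7_muMono hmumono (l-1) l (by omega) hlk
      set θ : ℝ := (s - mu (l-1))/(mu l - mu (l-1)) with hθ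
      have hθ0 : 0 ≤ θ := div_nonneg (by linarith) (by linarith)
      have hθ1 : θ ≤ 1 := (div_le_one (by linarith)).2 (by linarith)
      have hΔne : mu l - mu (l-1) ≠ 0 := sub_ne_zero.mpr (ne_of_gt huv)
      have hθΔ : θ * (mu l - mu (l-1)) = s - mu (l-1) := by
        rw [hθ]; field_simp
      have hcb : (1-θ) * (mu (l-1)) + θ * (mu l) = s := by linear_combination hθΔ
      have hmuIcc : ∀ j, j ≤ k → mu j ∈ Set.Icc (0:ℝ) 1 :=
        fun j hj => ⟨hmupos j hj, hmule1 j hj⟩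
      have hconc := hgc.2 (hmuIcc (l-1) (by omega)) (hmuIcc l hlk)
        (by linarith : (0:ℝ) ≤ 1-θ) hθ0 (by ring)
      simp only [smul_eq_mul] at hconc
      rw [hcb] at hconc
      have h3 := hgm (mu (l-1)) (hmuIcc (l-1) (by omega))
      have h4 := hgm (mu l) (hmuIcc l hlk)
      have h5 := hApt l hl1 hlk
      have hAval : A l s = (1-θ) * J (mu (l-1)) + θ * J (mu l) := by
        rw [hA_def, h5]
        linear_combination (-(slp l)) * hθΔ
      rw [hAval]
      nlinarith [mul_le_mul_of_nonneg_left h3 (by linarith : (0:ℝ) ≤ 1-θ),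
        mul_le_mul_of_nonneg_left h4 hθ0]
    exact le_antisymm (csInf_le ⟨G s, hlb⟩ hmem) (le_csInf ⟨G s, hmem⟩ hlb)
  have hmain : ∀ s ∈ Set.Ioc (0:ℝ) 1, Jhat s = ∫ r in (0:ℝ)..s, (σbar r) ^ 2 := by
    intro s hs
    rw [hJhatG s hs]
    exact (hIntPiece s hs).symm
  refine ⟨σbar, ⟨⟨k, hk1, mu, hmu0, hmuk, hmumono, hstepbar⟩, hanti, hpos, hmain⟩, ?_⟩
  -- uniqueness
  rintro σ' ⟨⟨m', hm'1, mu', hmu'0, hmu'k, hmu'mono, hstep'⟩, -, hpos', hint'⟩ s hs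
  obtain ⟨j, hj1, hjm, ha1, ha2⟩ := st7_locate hmu'0 hmu'mono hs.1 (by rw [hmu'k]; exact hs.2)
  obtain ⟨l, hl1, hlk, hb1, hb2⟩ := st7_locate hmu0 hmumono hs.1 (by rw [hmuk]; exact hs.2)
  set t : ℝ := (max (mu' (j-1)) (mu (l-1)) + s)/2 with hT
  have hmax : max (mu' (j-1)) (mu (l-1)) < s := max_lt ha1 hb1
  have h1 : mu' (j-1) < t := by
    have := le_max_left (mu' (j-1)) (mu (l-1))
    rw [hT]; linarith
  have h2 : mu (l-1) < t := by
    have := le_max_right (mu' (j-1)) (mu (l-1))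
    rw [hT]; linarith
  have h3 : t < s := by rw [hT]; linarith
  have ht0 : 0 < t := by
    have h4 : (0:ℝ) ≤ mu' (j-1) := by
      rw [← hmu'0]; exact st7_muMono' hmu'mono 0 (j-1) (by omega) (by omega)
    linarith
  have htIoc : t ∈ Set.Ioc (0:ℝ) 1 := ⟨ht0, by linarith [hs.2]⟩
  have e1 : Jhat s - Jhat t = σ' (mu' j) ^ 2 * (s - t) := by
    rw [hint' s hs, hint' t htIoc]
    exact st7_stepDiff (c := fun j => σ' (mu' j)) hmu'0 hmu'mono hstep' hj1 hjm h1.le h3.le ha2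
  have e2 : Jhat s - Jhat t = slp l * (s - t) := by
    rw [hmain s hs, hmain t htIoc]
    have hd := st7_stepDiff (c := fun j => Real.sqrt (slp j)) hmu0 hmumono hstep_c
      hl1 hlk h2.le h3.le hb2
    rwa [Real.sq_sqrt (hslp_pos l hl1 hlk).le] at hd
  have hσs : σ' s = σ' (mu' j) := hstep' j hj1 hjm s ⟨ha1, ha2⟩
  have hσbs : σbar s ^ 2 = slp l := by
    rw [hσbar]
    simp only
    rw [hjof_eq l hl1 hlk s ⟨hb1, hb2⟩]
    exact Real.sq_sqrt (hslp_pos l hl1 hlk).le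
  have hst : 0 < s - t := by linarith
  have heq : σ' s ^ 2 = σbar s ^ 2 := by
    rw [hσs, hσbs]
    have h5 : σ' (mu' j) ^ 2 * (s - t) = slp l * (s - t) := by rw [← e1, e2]
    exact mul_right_cancel₀ (ne_of_gt hst) h5
  have hp1 := hpos' s hs
  have hp2 := hpos s hs
  apply le_antisymm
  · nlinarith [heq, hp1, hp2]
  · nlinarith [heq, hp1, hp2]
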